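/- Fix real numbers M and a with 0 < |a| < M, set Δ(r) = r² − 2Mr + a², r₊ = M + √(M² − a²), r₋ = M − √(M² − a²), μ(r) = Δ(r)/(r² + a²), and let ρ : ℝ → (r₋, r₊) be the inverse of the map r ↦ 2∫_M^r (s² + a²)/Δ(s) ds. Let x₀ ∈ ℝ, E ≥ 0, and let F : (−∞, x₀] → ℝ be differentiable with ∫_{−∞}^{x₀} (−μ(ρ(t)))^{−1}·F'(t)² dt ≤ E². Then the limit L := lim_{t → −∞} F(t) exists, and for every x ≤ x₀ one has |F(x) − L| ≤ (2(r₊ − ρ(x)))^{1/2} · E. -/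

import Mathlib

open MeasureTheory

noncomputable def KerrDelta (M a r : ℝ) : ℝ := r ^ 2 - 2 * M * r + a ^ 2

noncomputable def rPlus (M a : ℝ) : ℝ := M + Real.sqrt (M ^ 2 - a ^ 2)

noncomputable def rMinus (M a : ℝ) : ℝ := M - Real.sqrt (M ^ 2 - a ^ 2)

noncomputable def kerrMu (M a r : ℝ) : ℝ := KerrDelta M a r / (r ^ 2 + a ^ 2)

/-- The tortoise coordinate `r*`, normalized by `r*(M) = 0`. -/
noncomputable def rStar (M a r : ℝ) : ℝ := ∫ s in M..r, (s ^ 2 + a ^ 2) / KerrDelta M a s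

section Aux

open Set Filter

variable {M a : ℝ}

lemma kerr_sq_pos (ha : 0 < |a|) (haM : |a| < M) : 0 < M ^ 2 - a ^ 2 := by
  have h1 : |a| ^ 2 < M ^ 2 := pow_lt_pow_left₀ haM (abs_nonneg a) (by norm_num)
  rw [sq_abs] at h1; linarith

lemma kerr_sqrt_pos (ha : 0 < |a|) (haM : |a| < M) : 0 < Real.sqrt (M ^ 2 - a ^ 2) :=
  Real.sqrt_pos.mpr (kerr_sq_pos ha haM)

lemma kerr_rMinus_lt_M (ha : 0 < |a|) (haM : |a| < M) : rMinus M a < M := by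
  have := kerr_sqrt_pos ha haM; unfold rMinus; linarith

lemma kerr_M_lt_rPlus (ha : 0 < |a|) (haM : |a| < M) : M < rPlus M a := by
  have := kerr_sqrt_pos ha haM; unfold rPlus; linarith

lemma kerrDelta_eq (ha : 0 < |a|) (haM : |a| < M) (r : ℝ) :
    KerrDelta M a r = (r - rMinus M a) * (r - rPlus M a) := by
  have h := Real.sq_sqrt (le_of_lt (kerr_sq_pos ha haM))
  unfold KerrDelta rMinus rPlus
  nlinarith [h]

lemma kerrDelta_neg (ha : 0 < |a|) (haM : |a| < M) {r : ℝ}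
    (hr : r ∈ Ioo (rMinus M a) (rPlus M a)) : KerrDelta M a r < 0 := by
  rw [kerrDelta_eq ha haM]
  exact mul_neg_of_pos_of_neg (by linarith [hr.1]) (by linarith [hr.2])

lemma kerr_denom_pos (ha : 0 < |a|) (r : ℝ) : 0 < r ^ 2 + a ^ 2 := by
  have : a ≠ 0 := abs_pos.mp ha
  positivity

lemma kerr_neg_mu_pos (ha : 0 < |a|) (haM : |a| < M) {r : ℝ}
    (hr : r ∈ Ioo (rMinus M a) (rPlus M a)) : 0 < -kerrMu M a r := by
  unfold kerrMu
  have h1 := kerrDelta_neg ha haM hr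
  have h2 := kerr_denom_pos ha r
  rw [neg_pos]
  exact div_neg_of_neg_of_pos h1 h2

end Aux

/-- Cauchy–Schwarz estimate: a weighted energy bound `∫_{−∞}^{x₀} (−μ∘ρ)^{-1} (F')² ≤ E²`
on the derivative along a constant-`ū` curve yields the existence of the limit of `F`
at `−∞` and the pointwise bound `|F(x) − L| ≤ (2(r₊ − ρ(x)))^{1/2} E`. -/
theorem energy_to_pointwise_bound (M a : ℝ) (ha : 0 < |a|) (haM : |a| < M)
    (ρ : ℝ → ℝ) (hρmem : ∀ x : ℝ, ρ x ∈ Set.Ioo (rMinus M a) (rPlus M a))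
    (hρinv : ∀ x : ℝ, 2 * rStar M a (ρ x) = x)
    (x₀ E : ℝ) (hE : 0 ≤ E) (F F' : ℝ → ℝ)
    (hF : ∀ t : ℝ, t ≤ x₀ → HasDerivAt F (F' t) t)
    (hInt : IntegrableOn (fun t => (-kerrMu M a (ρ t))⁻¹ * F' t ^ 2) (Set.Iic x₀))
    (hbound : (∫ t in Set.Iic x₀, (-kerrMu M a (ρ t))⁻¹ * F' t ^ 2) ≤ E ^ 2) :
    ∃ L : ℝ, Filter.Tendsto F Filter.atBot (nhds L) ∧
      ∀ x : ℝ, x ≤ x₀ → |F x - L| ≤ Real.sqrt (2 * (rPlus M a - ρ x)) * E := by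
  classical
  open Set Filter in
  set rm := rMinus M a with hrm
  set rp := rPlus M a with hrp
  set S : Set ℝ := Set.Ioo rm rp with hS
  have hMS : M ∈ S := ⟨kerr_rMinus_lt_M ha haM, kerr_M_lt_rPlus ha haM⟩
  have hrmrp : rm < rp := hMS.1.trans hMS.2
  set T : ℝ → ℝ := fun r => 2 * rStar M a r with hT
  set h : ℝ → ℝ := fun s => (s ^ 2 + a ^ 2) / KerrDelta M a s with hh
  -- continuity of h on subsets of S
  have hhcont : ∀ {u : Set ℝ}, u ⊆ S → ContinuousOn h u := by
    intro u hu
    apply ContinuousOn.div (by fun_prop) (by unfold KerrDelta; fun_prop)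
    exact fun s hs => ne_of_lt (kerrDelta_neg ha haM (hu hs))
  have hhmeas : Measurable h := by
    apply Measurable.div (by fun_prop) (by unfold KerrDelta; fun_prop)
  -- derivative of T on S
  have hTderiv : ∀ r ∈ S, HasDerivAt T (2 * ((r ^ 2 + a ^ 2) / KerrDelta M a r)) r := by
    intro r hr
    have hsub : Set.uIcc M r ⊆ S := Set.ordConnected_Ioo.uIcc_subset hMS hr
    have hint : IntervalIntegrable h MeasureTheory.volume M r :=
      (hhcont hsub).intervalIntegrable
    have h1 : HasDerivAt (fun u => rStar M a u) (h r) r :=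
      intervalIntegral.integral_hasDerivAt_right hint
        (hhmeas.stronglyMeasurable.stronglyMeasurableAtFilter)
        ((hhcont (subset_refl S)).continuousAt (isOpen_Ioo.mem_nhds hr))
    simpa [hT] using h1.const_mul 2
  -- T strictly antitone on S
  have hTanti : StrictAntiOn T S := by
    apply strictAntiOn_of_deriv_neg (convex_Ioo _ _)
    · exact fun r hr => (hTderiv r hr).continuousAt.continuousWithinAt
    · intro r hr
      rw [interior_Ioo] at hr
      rw [(hTderiv r hr).deriv]
      have h1 := kerrDelta_neg ha haM hr
      have h2 := kerr_denom_pos ha r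
      have : (r ^ 2 + a ^ 2) / KerrDelta M a r < 0 := div_neg_of_pos_of_neg h2 h1
      linarith
  -- ρ is a left inverse of T
  have hρT : ∀ r ∈ S, ρ (T r) = r := by
    intro r hr
    exact hTanti.injOn (hρmem (T r)) hr (hρinv (T r))
  -- ρ is antitone
  have hρanti : Antitone ρ := by
    intro x y hxy
    by_contra hlt
    push_neg at hlt
    have := hTanti (hρmem x) (hρmem y) hlt
    rw [show T (ρ x) = x from hρinv x, show T (ρ y) = y from hρinv y] at this
    linarith
  -- ρ is continuous
  have hρcont : Continuous ρ := by
    have hneg : Continuous (fun x => -ρ x) := by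
      apply continuous_iff_continuousAt.mpr
      intro x
      apply continuousAt_of_monotoneOn_of_image_mem_nhds
        (f := fun x => -ρ x) (s := Set.univ)
        (fun u _ v _ huv => neg_le_neg (hρanti huv)) Filter.univ_mem
      have hsub : Set.Ioo (-rp) (-rm) ⊆ (fun x => -ρ x) '' Set.univ := by
        rintro z ⟨hz1, hz2⟩
        refine ⟨T (-z), Set.mem_univ _, ?_⟩
        show -ρ (T (-z)) = z
        rw [hρT (-z) ⟨by linarith, by linarith⟩]; ring
      refine Filter.mem_of_superset (isOpen_Ioo.mem_nhds ?_) hsub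
      exact ⟨by have := (hρmem x).2; simp; linarith, by have := (hρmem x).1; simp; linarith⟩
    convert hneg.neg using 1; funext x; simp
  -- the weight and its positivity
  have hWpos : ∀ t : ℝ, 0 < -kerrMu M a (ρ t) := fun t => kerr_neg_mu_pos ha haM (hρmem t)
  have hWcont : Continuous (fun t => -kerrMu M a (ρ t)) := by
    have hden : ∀ r : ℝ, r ^ 2 + a ^ 2 ≠ 0 := fun r => (kerr_denom_pos ha r).ne'
    have : Continuous (fun r : ℝ => kerrMu M a r) := by
      unfold kerrMu KerrDelta
      exact Continuous.div (by fun_prop) (by fun_prop) hden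
    exact (this.comp hρcont).neg
  -- the key interval identity
  have hkey : ∀ x y : ℝ, (∫ t in y..x, -kerrMu M a (ρ t)) = 2 * (ρ y - ρ x) := by
    intro x y
    have hsub : Set.uIcc (ρ x) (ρ y) ⊆ S :=
      Set.ordConnected_Ioo.uIcc_subset (hρmem x) (hρmem y)
    have h1 : (∫ r in (ρ x)..(ρ y),
          (2 * ((r ^ 2 + a ^ 2) / KerrDelta M a r)) • ((fun t => -kerrMu M a (ρ t)) ∘ T) r)
        = ∫ t in T (ρ x)..T (ρ y), -kerrMu M a (ρ t) := by
      apply intervalIntegral.integral_comp_smul_deriv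
        (fun r hr => hTderiv r (hsub hr)) ?_ hWcont
      apply ContinuousOn.mul continuousOn_const
      exact hhcont hsub
    have h2 : Set.EqOn
        (fun r => (2 * ((r ^ 2 + a ^ 2) / KerrDelta M a r)) • ((fun t => -kerrMu M a (ρ t)) ∘ T) r)
        (fun _ => (-2 : ℝ)) (Set.uIcc (ρ x) (ρ y)) := by
      intro r hr
      have hrS := hsub hr
      have hΔ : KerrDelta M a r ≠ 0 := (kerrDelta_neg ha haM hrS).ne
      have hden : r ^ 2 + a ^ 2 ≠ 0 := (kerr_denom_pos ha r).ne'
      simp only [Function.comp, hρT r hrS, smul_eq_mul, kerrMu]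
      field_simp
    rw [intervalIntegral.integral_congr h2] at h1
    simp only [intervalIntegral.integral_const, smul_eq_mul] at h1
    rw [show T (ρ x) = x from hρinv x, show T (ρ y) = y from hρinv y] at h1
    rw [intervalIntegral.integral_symm x y, ← h1]; ring
  -- ρ tends to rp at -∞
  have hρtop : Filter.Tendsto ρ Filter.atBot (nhds rp) := by
    have hmono : Monotone (fun x => ρ (-x)) := fun u v huv => hρanti (neg_le_neg huv)
    have hbdd : BddAbove (Set.range fun x => ρ (-x)) :=
      ⟨rp, by rintro z ⟨x, rfl⟩; exact (hρmem _).2.le⟩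
    have h1 := tendsto_atTop_ciSup hmono hbdd
    have hsup : (⨆ x : ℝ, ρ (-x)) = rp := by
      apply le_antisymm (ciSup_le fun x => (hρmem _).2.le)
      apply le_of_forall_lt
      intro w hw
      set r := (max w rm + rp) / 2 with hr
      have hmax : max w rm < rp := max_lt hw hrmrp
      have h1r : max w rm < r := by rw [hr]; linarith
      have h2r : r < rp := by rw [hr]; linarith
      have hrS : r ∈ S := ⟨lt_of_le_of_lt (le_max_right w rm) h1r, h2r⟩
      have hwr : w < r := lt_of_le_of_lt (le_max_left w rm) h1r
      have : ρ (-(- T r)) = r := by rw [neg_neg]; exact hρT r hrS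
      calc w < r := hwr
        _ = ρ (-(- T r)) := this.symm
        _ ≤ ⨆ x : ℝ, ρ (-x) := le_ciSup hbdd (-T r)
    rw [hsup] at h1
    have h2 : Filter.Tendsto (fun x : ℝ => ρ (-(-x))) Filter.atBot (nhds rp) :=
      h1.comp tendsto_neg_atBot_atTop
    simpa using h2
  -- integrability of the weight on Iic
  have hWint : ∀ x : ℝ, IntegrableOn (fun t => -kerrMu M a (ρ t)) (Set.Iic x) := by
    intro x
    apply MeasureTheory.integrableOn_Iic_of_intervalIntegral_norm_bounded
      (l := Filter.atBot) (a := fun i : ℝ => i) (2 * (rp - rm)) x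
      (fun i => (hWcont.integrableOn_Ioc)) Filter.tendsto_id
    filter_upwards [Filter.eventually_le_atBot x] with i hi
    have hcongr : Set.EqOn (fun t => ‖-kerrMu M a (ρ t)‖) (fun t => -kerrMu M a (ρ t))
        (Set.uIcc i x) := fun t _ => Real.norm_of_nonneg (hWpos t).le
    rw [intervalIntegral.integral_congr hcongr, hkey]
    have h1 := (hρmem i).2
    have h2 := (hρmem x).1
    linarith
  -- value of the improper integral of the weight
  have hWval : ∀ x : ℝ, (∫ t in Set.Iic x, -kerrMu M a (ρ t)) = 2 * (rp - ρ x) := by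
    intro x
    have h1 := MeasureTheory.intervalIntegral_tendsto_integral_Iic
      (l := Filter.atBot) (a := fun i : ℝ => i) x (hWint x) Filter.tendsto_id
    have h2 : Filter.Tendsto (fun i : ℝ => ∫ t in i..x, -kerrMu M a (ρ t))
        Filter.atBot (nhds (2 * (rp - ρ x))) := by
      have := ((hρtop.sub_const (ρ x)).const_mul 2)
      apply this.congr
      intro i
      exact (hkey x i).symm
    exact tendsto_nhds_unique h1 h2
  -- measurability of F' on Iic x for x ≤ x₀
  have hF'aesm : ∀ x : ℝ, x ≤ x₀ →
      AEStronglyMeasurable F' (MeasureTheory.volume.restrict (Set.Iic x)) := by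
    intro x hx
    apply (measurable_deriv F).aestronglyMeasurable.congr
    filter_upwards [MeasureTheory.ae_restrict_mem measurableSet_Iic] with t ht
    exact (hF t (le_trans ht hx)).deriv
  -- the Cauchy-Schwarz functions
  set f : ℝ → ℝ := fun t => Real.sqrt (-kerrMu M a (ρ t)) with hf
  set g : ℝ → ℝ := fun t => Real.sqrt ((-kerrMu M a (ρ t))⁻¹) * |F' t| with hg
  have hfg : ∀ t, f t * g t = |F' t| := by
    intro t
    rw [hf, hg]
    rw [← mul_assoc, ← Real.sqrt_mul (hWpos t).le, mul_inv_cancel₀ (hWpos t).ne',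
      Real.sqrt_one, one_mul]
  have hfsq : ∀ t, f t ^ 2 = -kerrMu M a (ρ t) := fun t => Real.sq_sqrt (hWpos t).le
  have hgsq : ∀ t, g t ^ 2 = (-kerrMu M a (ρ t))⁻¹ * F' t ^ 2 := by
    intro t
    rw [hg, mul_pow, Real.sq_sqrt (inv_nonneg.mpr (hWpos t).le), sq_abs]
  have hfcont : Continuous f := Real.continuous_sqrt.comp hWcont
  have hginvcont : Continuous (fun t => Real.sqrt ((-kerrMu M a (ρ t))⁻¹)) := by
    apply Real.continuous_sqrt.comp
    exact hWcont.inv₀ fun t => (hWpos t).ne'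
  -- integrability of g² on Iic x for x ≤ x₀
  have hgsqint : ∀ x : ℝ, x ≤ x₀ →
      Integrable (fun t => g t ^ 2) (MeasureTheory.volume.restrict (Set.Iic x)) := by
    intro x hx
    have := hInt.mono_set (Set.Iic_subset_Iic.mpr hx)
    apply this.congr
    filter_upwards with t
    exact (hgsq t).symm
  -- Memℒp statements
  have hf_mem : ∀ x : ℝ, MemLp f (ENNReal.ofReal 2) (MeasureTheory.volume.restrict (Set.Iic x)) := by
    intro x
    rw [show ENNReal.ofReal 2 = 2 by norm_num]
    apply (memLp_two_iff_integrable_sq hfcont.aestronglyMeasurable).mpr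
    apply ((hWint x).congr (by filter_upwards with t; exact (hfsq t).symm))
  have hg_mem : ∀ x : ℝ, x ≤ x₀ →
      MemLp g (ENNReal.ofReal 2) (MeasureTheory.volume.restrict (Set.Iic x)) := by
    intro x hx
    rw [show ENNReal.ofReal 2 = 2 by norm_num]
    have hgaesm : AEStronglyMeasurable g (MeasureTheory.volume.restrict (Set.Iic x)) := by
      apply AEStronglyMeasurable.mul hginvcont.aestronglyMeasurable.restrict
      exact (by simpa [Real.norm_eq_abs] using (hF'aesm x hx).norm : AEStronglyMeasurable (fun t => |F' t|) (MeasureTheory.volume.restrict (Set.Iic x)))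
    exact (memLp_two_iff_integrable_sq hgaesm).mpr (hgsqint x hx)
  -- the main Cauchy-Schwarz estimate
  have hCS : ∀ x : ℝ, x ≤ x₀ →
      (∫ t in Set.Iic x, |F' t|) ≤ Real.sqrt (2 * (rp - ρ x)) * E := by
    intro x hx
    have hconj : Real.HolderConjugate 2 2 := Real.HolderConjugate.two_two
    have key := MeasureTheory.integral_mul_le_Lp_mul_Lq_of_nonneg hconj
      (f := f) (g := g)
      (by filter_upwards with t; exact Real.sqrt_nonneg _)
      (by filter_upwards with t; positivity)
      (hf_mem x) (hg_mem x hx)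
    have hL : (∫ t in Set.Iic x, f t * g t) = ∫ t in Set.Iic x, |F' t| := by
      congr 1; funext t; exact hfg t
    have hrpow : ∀ u : ℝ → ℝ, (fun t => u t ^ (2 : ℝ)) = fun t => u t ^ 2 := by
      intro u; funext t; rw [Real.rpow_two]
    rw [hL] at key
    rw [show (fun t => f t ^ (2:ℝ)) = fun t => f t ^ 2 from hrpow f] at key
    rw [show (fun t => g t ^ (2:ℝ)) = fun t => g t ^ 2 from hrpow g] at key
    have hA : (∫ t in Set.Iic x, f t ^ 2) = 2 * (rp - ρ x) := by
      rw [show (fun t => f t ^ 2) = (fun t => -kerrMu M a (ρ t)) from funext hfsq]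
      exact hWval x
    have hB : (∫ t in Set.Iic x, g t ^ 2) ≤ E ^ 2 := by
      rw [show (fun t => g t ^ 2) = (fun t => (-kerrMu M a (ρ t))⁻¹ * F' t ^ 2)
        from funext hgsq]
      refine le_trans ?_ hbound
      apply MeasureTheory.setIntegral_mono_set hInt
      · filter_upwards with t
        exact mul_nonneg (inv_nonneg.mpr (hWpos t).le) (sq_nonneg _)
      · exact (Set.Iic_subset_Iic.mpr hx).eventuallyLE
    rw [hA] at key
    refine le_trans key ?_
    rw [← Real.sqrt_eq_rpow, ← Real.sqrt_eq_rpow]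
    apply mul_le_mul_of_nonneg_left ?_ (Real.sqrt_nonneg _)
    calc Real.sqrt (∫ t in Set.Iic x, g t ^ 2) ≤ Real.sqrt (E ^ 2) := Real.sqrt_le_sqrt hB
      _ = E := by rw [Real.sqrt_sq hE]
  -- F' is integrable on Iic x₀
  have hF'int : IntegrableOn F' (Set.Iic x₀) := by
    have hfsqint : Integrable (fun t => f t ^ 2)
        (MeasureTheory.volume.restrict (Set.Iic x₀)) :=
      (hWint x₀).congr (by filter_upwards with t; exact (hfsq t).symm)
    have hsum : Integrable (fun t => f t ^ 2 + g t ^ 2)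
        (MeasureTheory.volume.restrict (Set.Iic x₀)) := hfsqint.add (hgsqint x₀ le_rfl)
    apply hsum.mono' (hF'aesm x₀ le_rfl)
    filter_upwards with t
    rw [Real.norm_eq_abs, ← hfg t]
    nlinarith [sq_nonneg (f t - g t), abs_nonneg (F' t), hfg t]
  -- conclusion
  set L := limUnder Filter.atBot F with hLdef
  have hTend : Filter.Tendsto F Filter.atBot (nhds L) :=
    MeasureTheory.tendsto_limUnder_of_hasDerivAt_of_integrableOn_Iic
      (fun t ht => hF t (Set.mem_Iic.mp ht)) hF'int
  refine ⟨L, hTend, fun x hx => ?_⟩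
  have hFTC : (∫ t in Set.Iic x, F' t) = F x - L :=
    MeasureTheory.integral_Iic_of_hasDerivAt_of_tendsto
      ((hF x hx).continuousAt.continuousWithinAt)
      (fun t ht => hF t (le_of_lt (lt_of_lt_of_le (Set.mem_Iio.mp ht) hx)))
      (hF'int.mono_set (Set.Iic_subset_Iic.mpr hx)) hTend
  calc |F x - L| = |∫ t in Set.Iic x, F' t| := by rw [hFTC]
    _ ≤ ∫ t in Set.Iic x, |F' t| := by
        simpa [Real.norm_eq_abs] using
          MeasureTheory.norm_integral_le_integral_norm
            (μ := MeasureTheory.volume.restrict (Set.Iic x)) F'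
    _ ≤ Real.sqrt (2 * (rp - ρ x)) * E := hCS x hx
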